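/- arXiv:2201.05586 — 4 statements merged into one kernel-verified Lean document; each statement's English description precedes it below -/
import Mathlib

section
/- The variance of the ELM surrogate with exponential activation satisfies var(f̂) = Σ_{j=1}^n Σ_{i=1}^n β_j β_i e^{b_j + b_i} ( ∏_{l=1}^d ε(w_{j,l} + w_{i,l}) − ∏_{r=1}^d ε(w_{j,r}) ε(w_{i,r}) ), where var(f̂) = E(f̂²) − (E(f̂))² and expectations are taken over x uniformly distributed on [0,1]^d. -/
open MeasureTheory Real

/-- The function ε(t) = (e^t − 1)/t for t ≠ 0, and ε(0) = 1. -/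
noncomputable def eps (t : ℝ) : ℝ := if t = 0 then 1 else (Real.exp t - 1) / t

/-- ELM surrogate with exponential activation:
`f̂(x) = Σ_{j=1}^n β_j exp(w_jᵀ x + b_j)`. -/
noncomputable def elm {d n : ℕ} (β b : Fin n → ℝ) (w : Fin n → Fin d → ℝ)
    (x : Fin d → ℝ) : ℝ :=
  ∑ j, β j * Real.exp ((∑ l, w j l * x l) + b j)

lemma eps_eq (c : ℝ) : ∫ x in Set.Icc (0:ℝ) 1, Real.exp (c * x) = eps c := by
  rcases eq_or_ne c 0 with h | h
  · simp [h, eps]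
  · rw [MeasureTheory.integral_Icc_eq_integral_Ioc,
      ← intervalIntegral.integral_of_le (by norm_num : (0:ℝ) ≤ 1)]
    rw [intervalIntegral.integral_comp_mul_left (fun t => Real.exp t) h]
    simp [eps, h, integral_exp, div_eq_inv_mul]

lemma int_exp_lin {d : ℕ} (c : Fin d → ℝ) :
    ∫ x in Set.Icc (0 : Fin d → ℝ) 1, Real.exp (∑ l, c l * x l)
      = ∏ l, eps (c l) := by
  have h1 : ∀ x : Fin d → ℝ, Real.exp (∑ l, c l * x l) = ∏ l, Real.exp (c l * x l) := by
    intro x; rw [Real.exp_sum]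
  simp_rw [h1]
  rw [← Set.pi_univ_Icc, ← MeasureTheory.integral_indicator
    (MeasurableSet.univ_pi (fun _ => measurableSet_Icc))]
  have h2 : ∀ x : Fin d → ℝ,
      (Set.pi Set.univ (fun _ => Set.Icc (0:ℝ) 1)).indicator
        (fun x => ∏ l, Real.exp (c l * x l)) x
      = ∏ l, (Set.Icc (0:ℝ) 1).indicator (fun t => Real.exp (c l * t)) (x l) := by
    intro x
    by_cases hx : x ∈ Set.pi Set.univ (fun _ => Set.Icc (0:ℝ) 1)
    · rw [Set.indicator_of_mem hx]
      exact Finset.prod_congr rfl fun l _ =>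
        (Set.indicator_of_mem (hx l (Set.mem_univ l)) (fun t => Real.exp (c l * t))).symm
    · rw [Set.indicator_of_notMem hx]
      rw [Set.mem_univ_pi] at hx
      push_neg at hx
      obtain ⟨l, hl⟩ := hx
      exact (Finset.prod_eq_zero (Finset.mem_univ l)
        (Set.indicator_of_notMem hl _)).symm
  simp only [Pi.zero_apply, Pi.one_apply]
  rw [MeasureTheory.integral_congr_ae (Filter.Eventually.of_forall h2)]
  rw [MeasureTheory.volume_pi, MeasureTheory.integral_fintype_prod_eq_prod (ι := Fin d)
    (fun l (t : ℝ) => (Set.Icc (0:ℝ) 1).indicator (fun s => Real.exp (c l * s)) t)]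
  exact Finset.prod_congr rfl fun l _ => by
    rw [MeasureTheory.integral_indicator measurableSet_Icc, eps_eq]

/-- Variance of the ELM surrogate, `var(f̂) = E(f̂²) − (E(f̂))²`, over the uniform
measure on `[0,1]^d`:
`var(f̂) = Σ_j Σ_i β_j β_i e^{b_j+b_i} (∏_l ε(w_{j,l}+w_{i,l}) − ∏_r ε(w_{j,r}) ε(w_{i,r}))`. -/
theorem elm_variance (d n : ℕ) (hd : 0 < d) (hn : 0 < n)
    (β b : Fin n → ℝ) (w : Fin n → Fin d → ℝ) :
    (∫ x in Set.Icc (0 : Fin d → ℝ) 1, (elm β b w x) ^ 2) -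
        (∫ x in Set.Icc (0 : Fin d → ℝ) 1, elm β b w x) ^ 2 =
      ∑ j, ∑ i, β j * β i * Real.exp (b j + b i) *
        ((∏ l, eps (w j l + w i l)) - ∏ r, eps (w j r) * eps (w i r)) := by
  have hint : ∀ c : Fin d → ℝ,
      MeasureTheory.IntegrableOn (fun x : Fin d → ℝ => Real.exp (∑ l, c l * x l))
        (Set.Icc 0 1) := by
    intro c
    have hc : Continuous fun x : Fin d → ℝ => Real.exp (∑ l, c l * x l) := by fun_prop
    exact hc.continuousOn.integrableOn_compact isCompact_Icc
  have helm : ∀ x, elm β b w x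
      = ∑ j, (β j * Real.exp (b j)) * Real.exp (∑ l, w j l * x l) := by
    intro x
    exact Finset.sum_congr rfl fun j _ => by rw [Real.exp_add]; ring
  have I1 : ∫ x in Set.Icc (0 : Fin d → ℝ) 1, elm β b w x
      = ∑ j, β j * Real.exp (b j) * ∏ l, eps (w j l) := by
    simp_rw [helm]
    rw [MeasureTheory.integral_finset_sum _ (fun j _ => (hint (w j)).const_mul _)]
    simp_rw [MeasureTheory.integral_const_mul, int_exp_lin]
  have hsq : ∀ x, (elm β b w x) ^ 2
      = ∑ j, ∑ i, (β j * β i * Real.exp (b j + b i))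
          * Real.exp (∑ l, (w j l + w i l) * x l) := by
    intro x
    rw [helm, sq, Finset.sum_mul_sum]
    refine Finset.sum_congr rfl fun j _ => Finset.sum_congr rfl fun i _ => ?_
    have h : ∑ l, (w j l + w i l) * x l
        = (∑ l, w j l * x l) + ∑ l, w i l * x l := by
      rw [← Finset.sum_add_distrib]
      exact Finset.sum_congr rfl fun l _ => add_mul _ _ _
    rw [h, Real.exp_add, Real.exp_add]
    ring
  have I2 : ∫ x in Set.Icc (0 : Fin d → ℝ) 1, (elm β b w x) ^ 2
      = ∑ j, ∑ i, β j * β i * Real.exp (b j + b i) * ∏ l, eps (w j l + w i l) := by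
    simp_rw [hsq]
    rw [MeasureTheory.integral_finset_sum _ (fun j _ =>
      MeasureTheory.integrable_finset_sum _ (fun i _ => (hint _).const_mul _))]
    refine Finset.sum_congr rfl fun j _ => ?_
    rw [MeasureTheory.integral_finset_sum _ (fun i _ => (hint _).const_mul _)]
    simp_rw [MeasureTheory.integral_const_mul, int_exp_lin]
  rw [I1, I2, sq, Finset.sum_mul_sum]
  rw [← Finset.sum_sub_distrib]
  refine Finset.sum_congr rfl fun j _ => ?_
  rw [← Finset.sum_sub_distrib]
  refine Finset.sum_congr rfl fun i _ => ?_
  rw [Real.exp_add, Finset.prod_mul_distrib]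
  ring
end

section
/- Fix k ∈ {1,…,d} and define g_k : [0,1] → ℝ by g_k(t) = ∫_{[0,1]^{d−1}} f̂(x) dx_{−k}, the integral of f̂ over all coordinates except x_k, with x_k = t. Then the variance of g_k (with t uniform on [0,1]) equals Σ_{j=1}^n Σ_{i=1}^n β_j β_i e^{b_j + b_i} ( ε(w_{j,k} + w_{i,k}) − ε(w_{j,k}) ε(w_{i,k}) ) ∏_{l≠k} ε(w_{j,l}) ε(w_{i,l}). -/
open MeasureTheory Real

/-- For fixed `t`, `g_k(t) = ∫_{[0,1]^{d−1}} f̂(x) dx_{−k}` with `x_k = t`: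
the integral of the ELM surrogate over all coordinates except the `k`-th one. -/
noncomputable def gk {d n : ℕ} (β b : Fin n → ℝ) (w : Fin n → Fin d → ℝ)
    (k : Fin d) (t : ℝ) : ℝ :=
  ∫ y in Set.Icc (0 : Fin d → ℝ) 1, elm β b w (Function.update y k t)

lemma integral_exp_mul_Icc (a : ℝ) :
    ∫ t in Set.Icc (0 : ℝ) 1, Real.exp (a * t) = eps a := by
  rw [MeasureTheory.integral_Icc_eq_integral_Ioc,
    ← intervalIntegral.integral_of_le (zero_le_one)]
  unfold eps
  by_cases h : a = 0
  · simp [h]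
  · rw [if_neg h, intervalIntegral.integral_comp_mul_left (fun x => Real.exp x) h]
    simp [integral_exp, smul_eq_mul]
    ring

lemma restrict_pi_Icc (d : ℕ) :
    (volume : Measure (Fin d → ℝ)).restrict (Set.Icc 0 1) =
      Measure.pi (fun _ : Fin d => (volume : Measure ℝ).restrict (Set.Icc 0 1)) := by
  refine (Measure.pi_eq fun s hs => ?_).symm
  rw [Measure.restrict_apply (MeasurableSet.univ_pi hs)]
  have hIcc : Set.Icc (0 : Fin d → ℝ) 1 = Set.pi Set.univ fun _ => Set.Icc (0 : ℝ) 1 := by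
    rw [← Set.pi_univ_Icc]; rfl
  rw [hIcc, ← Set.pi_inter_distrib, volume_pi, Measure.pi_pi]
  exact Finset.prod_congr rfl fun i _ => (Measure.restrict_apply (hs i)).symm

lemma integral_Icc_pi_prod {d : ℕ} (f : Fin d → ℝ → ℝ) :
    ∫ y in Set.Icc (0 : Fin d → ℝ) 1, ∏ l, f l (y l) =
      ∏ l, ∫ t in Set.Icc (0 : ℝ) 1, f l t := by
  rw [restrict_pi_Icc]
  exact MeasureTheory.integral_fintype_prod_eq_prod (E := fun _ => ℝ) f
    (μ := fun _ => ((volume : Measure ℝ).restrict (Set.Icc 0 1)))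

lemma gk_eq {d n : ℕ} (β b : Fin n → ℝ) (w : Fin n → Fin d → ℝ)
    (k : Fin d) (t : ℝ) :
    gk β b w k t = ∑ j, (β j * Real.exp (b j) * ∏ l ∈ Finset.univ.erase k, eps (w j l)) *
      Real.exp (w j k * t) := by
  have hcont : ∀ j : Fin n, Continuous fun y : Fin d → ℝ =>
      β j * Real.exp ((∑ l, w j l * Function.update y k t l) + b j) := by
    intro j
    refine continuous_const.mul (Real.continuous_exp.comp (Continuous.add ?_ continuous_const))
    refine continuous_finset_sum _ fun l _ => continuous_const.mul ?_
    by_cases h : l = k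
    · simp only [Function.update_apply, h, if_pos]
      exact continuous_const
    · simp only [Function.update_apply, if_neg h]
      exact continuous_apply l
  unfold gk elm
  rw [MeasureTheory.integral_finset_sum _ (fun j _ => (hcont j).integrableOn_Icc)]
  refine Finset.sum_congr rfl fun j _ => ?_
  have hpt : ∀ y : Fin d → ℝ,
      β j * Real.exp ((∑ l, w j l * Function.update y k t l) + b j) =
        β j * Real.exp (b j) *
          ∏ l, Real.exp (w j l * (if l = k then t else y l)) := by
    intro y
    rw [Real.exp_add, Real.exp_sum]
    simp_rw [Function.update_apply]
    ring
  simp_rw [hpt]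
  rw [MeasureTheory.integral_const_mul,
    integral_Icc_pi_prod (fun l s => Real.exp (w j l * (if l = k then t else s))),
    ← Finset.mul_prod_erase Finset.univ _ (Finset.mem_univ k)]
  have hk : (∫ s in Set.Icc (0 : ℝ) 1, Real.exp (w j k * (if k = k then t else s)))
      = Real.exp (w j k * t) := by
    simp [Real.volume_Icc]
  have hl : ∀ l ∈ Finset.univ.erase k,
      (∫ s in Set.Icc (0 : ℝ) 1, Real.exp (w j l * (if l = k then t else s)))
        = eps (w j l) := by
    intro l hl
    rw [Finset.mem_erase] at hl
    simp only [if_neg hl.1]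
    exact integral_exp_mul_Icc (w j l)
  rw [hk, Finset.prod_congr rfl hl]
  ring

/-- The variance of `g_k` (with `t` uniform on `[0,1]`) equals
`Σ_j Σ_i β_j β_i e^{b_j+b_i} (ε(w_{j,k}+w_{i,k}) − ε(w_{j,k}) ε(w_{i,k}))
  ∏_{l≠k} ε(w_{j,l}) ε(w_{i,l})`. -/
theorem elm_var_condExp_single (d n : ℕ) (hd : 0 < d) (hn : 0 < n)
    (β b : Fin n → ℝ) (w : Fin n → Fin d → ℝ) (k : Fin d) :
    (∫ t in Set.Icc (0 : ℝ) 1, (gk β b w k t) ^ 2) -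
        (∫ t in Set.Icc (0 : ℝ) 1, gk β b w k t) ^ 2 =
      ∑ j, ∑ i, β j * β i * Real.exp (b j + b i) *
        (eps (w j k + w i k) - eps (w j k) * eps (w i k)) *
        ∏ l ∈ Finset.univ.erase k, eps (w j l) * eps (w i l) := by
  set A : Fin n → ℝ := fun j => β j * Real.exp (b j) * ∏ l ∈ Finset.univ.erase k, eps (w j l)
    with hA
  have hconst : ∀ (c a : ℝ), Continuous fun t : ℝ => c * Real.exp (a * t) :=
    fun c a => continuous_const.mul (Real.continuous_exp.comp (continuous_const.mul continuous_id))
  have hI1 : (∫ t in Set.Icc (0 : ℝ) 1, gk β b w k t) = ∑ j, A j * eps (w j k) := by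
    have : ∀ t ∈ Set.Icc (0 : ℝ) 1, gk β b w k t = ∑ j, A j * Real.exp (w j k * t) :=
      fun t _ => gk_eq β b w k t
    rw [MeasureTheory.setIntegral_congr_fun measurableSet_Icc this,
      MeasureTheory.integral_finset_sum _ (fun j _ => (hconst (A j) (w j k)).integrableOn_Icc)]
    exact Finset.sum_congr rfl fun j _ => by
      rw [MeasureTheory.integral_const_mul, integral_exp_mul_Icc]
  have hI2 : (∫ t in Set.Icc (0 : ℝ) 1, (gk β b w k t) ^ 2) =
      ∑ j, ∑ i, A j * A i * eps (w j k + w i k) := by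
    have hsq : ∀ t ∈ Set.Icc (0 : ℝ) 1, (gk β b w k t) ^ 2 =
        ∑ j, ∑ i, A j * A i * Real.exp ((w j k + w i k) * t) := by
      intro t _
      rw [gk_eq β b w k t, sq, Finset.sum_mul_sum]
      refine Finset.sum_congr rfl fun j _ => Finset.sum_congr rfl fun i _ => ?_
      rw [add_mul, Real.exp_add]
      ring
    rw [MeasureTheory.setIntegral_congr_fun measurableSet_Icc hsq,
      MeasureTheory.integral_finset_sum _ (fun j _ => ?_)]
    · refine Finset.sum_congr rfl fun j _ => ?_
      rw [MeasureTheory.integral_finset_sum _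
        (fun i _ => (hconst (A j * A i) (w j k + w i k)).integrableOn_Icc)]
      exact Finset.sum_congr rfl fun i _ => by
        rw [MeasureTheory.integral_const_mul, integral_exp_mul_Icc]
    · exact (continuous_finset_sum _ fun i _ =>
        hconst (A j * A i) (w j k + w i k)).integrableOn_Icc
  rw [hI1, hI2, sq, Finset.sum_mul_sum, ← Finset.sum_sub_distrib]
  refine Finset.sum_congr rfl fun j _ => ?_
  rw [← Finset.sum_sub_distrib]
  refine Finset.sum_congr rfl fun i _ => ?_
  rw [hA]
  simp only [Real.exp_add, ← Finset.prod_mul_distrib]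
  rw [Finset.prod_mul_distrib]
  ring
end

section
/- Assume var(f̂) ≠ 0. For each k ∈ {1,…,d}, the first-order Sobol' index S_k = var(E(f̂ | x_k)) / var(f̂) of the ELM surrogate satisfies S_k = (1/var(f̂)) Σ_{j=1}^n Σ_{i=1}^n β_j β_i e^{b_j + b_i} ( ε(w_{j,k} + w_{i,k}) − ε(w_{j,k}) ε(w_{i,k}) ) ∏_{l≠k} ε(w_{j,l}) ε(w_{i,l}). -/
open MeasureTheory Real

/-- Variance of the ELM surrogate over the uniform measure on `[0,1]^d`. -/
noncomputable def elmVar {d n : ℕ} (β b : Fin n → ℝ) (w : Fin n → Fin d → ℝ) : ℝ :=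
  (∫ x in Set.Icc (0 : Fin d → ℝ) 1, (elm β b w x) ^ 2) -
    (∫ x in Set.Icc (0 : Fin d → ℝ) 1, elm β b w x) ^ 2

lemma eps_zero : eps 0 = 1 := by simp [eps]


lemma eps_integral (c : ℝ) : ∫ t in Set.Icc (0:ℝ) 1, Real.exp (c * t) = eps c := by
  rw [MeasureTheory.integral_Icc_eq_integral_Ioc,
    ← intervalIntegral.integral_of_le zero_le_one]
  by_cases hc : c = 0
  · simp [hc, eps]
  · have D : ∀ x : ℝ, HasDerivAt (fun y : ℝ => Real.exp (c * y) / c) (Real.exp (c * x)) x := by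
      intro x
      have := ((Real.hasDerivAt_exp (c * x)).comp x
        ((hasDerivAt_id x).const_mul c)).div_const c
      simpa [mul_comm, mul_div_assoc, mul_div_cancel_left₀ _ hc] using this
    rw [intervalIntegral.integral_eq_sub_of_hasDerivAt (fun x _ => D x)
      (Continuous.intervalIntegrable (by continuity) 0 1)]
    simp [eps, hc, sub_div]

lemma box_integral_exp {d : ℕ} (v : Fin d → ℝ) :
    ∫ y in Set.Icc (0 : Fin d → ℝ) 1, Real.exp (∑ l, v l * y l) = ∏ l, eps (v l) := by
  rw [← integral_indicator measurableSet_Icc]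
  have key : (Set.Icc (0 : Fin d → ℝ) 1).indicator (fun y => Real.exp (∑ l, v l * y l))
      = fun y => ∏ l, (Set.Icc (0:ℝ) 1).indicator (fun s => Real.exp (v l * s)) (y l) := by
    funext y
    by_cases hy : y ∈ Set.Icc (0 : Fin d → ℝ) 1
    · rw [Set.indicator_of_mem hy, Real.exp_sum]
      refine Finset.prod_congr rfl fun l _ => ?_
      rw [Set.indicator_of_mem (Set.mem_Icc.2 ⟨by simpa using hy.1 l, by simpa using hy.2 l⟩)]
    · rw [Set.indicator_of_notMem hy]
      rw [Set.mem_Icc, Pi.le_def, Pi.le_def, not_and_or] at hy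
      have : ∃ l, y l ∉ Set.Icc (0:ℝ) 1 := by
        rcases hy with hy | hy
        · push_neg at hy; obtain ⟨l, hl⟩ := hy
          exact ⟨l, fun h => absurd h.1 (not_le.2 (by simpa using hl))⟩
        · push_neg at hy; obtain ⟨l, hl⟩ := hy
          exact ⟨l, fun h => absurd h.2 (not_le.2 (by simpa using hl))⟩
      obtain ⟨l, hl⟩ := this
      exact (Finset.prod_eq_zero (Finset.mem_univ l)
        (Set.indicator_of_notMem hl _)).symm
  rw [key, MeasureTheory.integral_fintype_prod_volume_eq_prod
    (f := fun l (s : ℝ) => (Set.Icc (0:ℝ) 1).indicator (fun s => Real.exp (v l * s)) s)]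
  refine Finset.prod_congr rfl fun l _ => ?_
  rw [integral_indicator measurableSet_Icc, eps_integral]


lemma cont_exp_sum {d : ℕ} (v : Fin d → ℝ) :
    Continuous (fun y : Fin d → ℝ => Real.exp (∑ l, v l * y l)) :=
  Real.continuous_exp.comp (continuous_finset_sum _ fun l _ => (continuous_const.mul (continuous_apply l)))

lemma cont1 (a : ℝ) : Continuous fun t : ℝ => Real.exp (a * t) :=
  Real.continuous_exp.comp (continuous_const.mul continuous_id)

/-- Assuming `var(f̂) ≠ 0`, the first-order Sobol' index
`S_k = var(E(f̂ | x_k)) / var(f̂)` of the ELM surrogate satisfies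
`S_k = (1/var(f̂)) Σ_j Σ_i β_j β_i e^{b_j+b_i}
  (ε(w_{j,k}+w_{i,k}) − ε(w_{j,k}) ε(w_{i,k})) ∏_{l≠k} ε(w_{j,l}) ε(w_{i,l})`. -/
theorem elm_first_order_sobol (d n : ℕ) (hd : 0 < d) (hn : 0 < n)
    (β b : Fin n → ℝ) (w : Fin n → Fin d → ℝ) (k : Fin d)
    (hvar : elmVar β b w ≠ 0) :
    ((∫ t in Set.Icc (0 : ℝ) 1, (gk β b w k t) ^ 2) -
        (∫ t in Set.Icc (0 : ℝ) 1, gk β b w k t) ^ 2) / elmVar β b w =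
      (1 / elmVar β b w) *
        ∑ j, ∑ i, β j * β i * Real.exp (b j + b i) *
          (eps (w j k + w i k) - eps (w j k) * eps (w i k)) *
          ∏ l ∈ Finset.univ.erase k, eps (w j l) * eps (w i l) := by
  set c : Fin n → ℝ := fun j =>
    β j * Real.exp (b j) * ∏ l ∈ Finset.univ.erase k, eps (w j l) with hc
  have h1 : ∫ t in Set.Icc (0:ℝ) 1, gk β b w k t = ∑ j, c j * eps (w j k) := by
    simp only [gk_eq, ← hc]
    rw [integral_finset_sum _ fun j _ =>
      ((continuous_const.fun_mul (cont1 (w j k))).integrableOn_Icc)]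
    exact Finset.sum_congr rfl fun j _ => by rw [integral_const_mul, eps_integral]
  have h2 : ∫ t in Set.Icc (0:ℝ) 1, (gk β b w k t) ^ 2
      = ∑ j, ∑ i, (c j * c i) * eps (w j k + w i k) := by
    have sq_eq : ∀ t : ℝ, (∑ j, c j * Real.exp (w j k * t)) ^ 2
        = ∑ j, ∑ i, (c j * c i) * Real.exp ((w j k + w i k) * t) := by
      intro t
      rw [sq, Finset.sum_mul_sum]
      exact Finset.sum_congr rfl fun j _ => Finset.sum_congr rfl fun i _ => by
        rw [add_mul, Real.exp_add]; ring
    simp only [gk_eq, ← hc, sq_eq]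
    simp only [show ∀ t : ℝ, (∑ j, (β j * Real.exp (b j) * ∏ l ∈ Finset.univ.erase k, eps (w j l)) *
        Real.exp (w j k * t)) ^ 2 = _ from sq_eq]
    rw [integral_finset_sum _ fun j _ => integrable_finset_sum _ fun i _ =>
      ((continuous_const.fun_mul (cont1 _)).integrableOn_Icc)]
    refine Finset.sum_congr rfl fun j _ => ?_
    rw [integral_finset_sum _ fun i _ =>
      ((continuous_const.fun_mul (cont1 _)).integrableOn_Icc)]
    exact Finset.sum_congr rfl fun i _ => by rw [integral_const_mul, eps_integral]
  rw [h1, h2, div_eq_mul_one_div, mul_comm]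
  congr 1
  rw [sq, Finset.sum_mul_sum, ← Finset.sum_sub_distrib]
  refine Finset.sum_congr rfl fun j _ => ?_
  rw [← Finset.sum_sub_distrib]
  refine Finset.sum_congr rfl fun i _ => ?_
  rw [hc, Real.exp_add, Finset.prod_mul_distrib]
  ring
end

section
/- The variance of the benchmark function f_δ with respect to the uniform measure on [0,1]^d is var(f_δ) = (dδ/9)(3/2)^d + δ² ( (7/3)^d − (9/4)^d ) + d/12. -/
open MeasureTheory Real

/-- Benchmark function `f_δ(x) = Σ_{i=1}^d x_i + δ ∏_{j=1}^d (1 + x_j)` on `[0,1]^d`. -/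
noncomputable def fdelta {d : ℕ} (δ : ℝ) (x : Fin d → ℝ) : ℝ :=
  (∑ i, x i) + δ * ∏ j, (1 + x j)


lemma prod_int {d : ℕ} (g : Fin d → ℝ → ℝ) :
    ∫ x in Set.Icc (0 : Fin d → ℝ) 1, ∏ j, g j (x j)
      = ∏ j, ∫ t in Set.Icc (0:ℝ) 1, g j t := by
  have hmeas : MeasurableSet (Set.pi Set.univ fun _ : Fin d => Set.Icc (0:ℝ) 1) :=
    MeasurableSet.univ_pi fun _ => measurableSet_Icc
  rw [← Set.pi_univ_Icc]
  simp only [Pi.zero_apply, Pi.one_apply]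
  rw [← integral_indicator hmeas]
  have heq : (Set.pi Set.univ fun _ : Fin d => Set.Icc (0:ℝ) 1).indicator
      (fun x => ∏ j, g j (x j))
      = fun x => ∏ j, (Set.Icc (0:ℝ) 1).indicator (g j) (x j) := by
    ext x
    by_cases hx : x ∈ Set.pi Set.univ fun _ : Fin d => Set.Icc (0:ℝ) 1
    · rw [Set.indicator_of_mem hx]
      exact Finset.prod_congr rfl fun j _ =>
        (Set.indicator_of_mem (hx j (Set.mem_univ j)) _).symm
    · rw [Set.indicator_of_notMem hx]
      rw [Set.mem_univ_pi] at hx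
      push_neg at hx
      obtain ⟨j, hj⟩ := hx
      exact (Finset.prod_eq_zero (Finset.mem_univ j)
        (Set.indicator_of_notMem hj _)).symm
  rw [heq, volume_pi, integral_fintype_prod_eq_prod
    (fun j => (Set.Icc (0:ℝ) 1).indicator (g j))]
  exact Finset.prod_congr rfl fun j _ => by rw [integral_indicator measurableSet_Icc]

lemma int_one' : ∫ t in Set.Icc (0:ℝ) 1, (1:ℝ) = 1 := by simp
lemma int_id' : ∫ t in Set.Icc (0:ℝ) 1, t = 1/2 := by
  rw [MeasureTheory.integral_Icc_eq_integral_Ioc,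
    ← intervalIntegral.integral_of_le (by norm_num : (0:ℝ) ≤ 1)]
  simp
lemma int_tt : ∫ t in Set.Icc (0:ℝ) 1, t * t = 1/3 := by
  rw [MeasureTheory.integral_Icc_eq_integral_Ioc,
    ← intervalIntegral.integral_of_le (by norm_num : (0:ℝ) ≤ 1)]
  simp_rw [← sq]
  rw [integral_pow]
  norm_num

lemma int_1p : ∫ t in Set.Icc (0:ℝ) 1, (1 + t) = 3/2 := by
  rw [MeasureTheory.integral_Icc_eq_integral_Ioc,
    ← intervalIntegral.integral_of_le (by norm_num : (0:ℝ) ≤ 1),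
    intervalIntegral.integral_comp_add_left (fun u => u) 1, integral_id]
  norm_num
lemma int_1p2 : ∫ t in Set.Icc (0:ℝ) 1, (1 + t) * (1 + t) = 7/3 := by
  rw [MeasureTheory.integral_Icc_eq_integral_Ioc,
    ← intervalIntegral.integral_of_le (by norm_num : (0:ℝ) ≤ 1)]
  simp_rw [← sq]
  rw [intervalIntegral.integral_comp_add_left (fun u => u ^ 2) 1, integral_pow]
  norm_num
lemma int_t1p : ∫ t in Set.Icc (0:ℝ) 1, t * (1 + t) = 5/6 := by
  rw [MeasureTheory.integral_Icc_eq_integral_Ioc,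
    ← intervalIntegral.integral_of_le (by norm_num : (0:ℝ) ≤ 1)]
  have : ∀ t : ℝ, t * (1 + t) = t + t ^ 2 := fun t => by ring
  simp_rw [this]
  rw [intervalIntegral.integral_add (f := fun x => x) (g := fun x => x ^ 2)
    (continuous_id.intervalIntegrable _ _) ((continuous_pow 2).intervalIntegrable _ _),
    integral_pow, integral_id]
  norm_num

lemma int_coord {d : ℕ} (i : Fin d) :
    ∫ x in Set.Icc (0 : Fin d → ℝ) 1, x i = 1/2 := by
  have h1 : ∀ x : Fin d → ℝ, x i = ∏ j, (if j = i then x j else 1) := by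
    intro x; rw [Finset.prod_ite_eq' Finset.univ i (fun j => x j)]
    simp
  simp_rw [h1]
  rw [prod_int (fun j t => if j = i then t else 1)]
  have h2 : ∀ j : Fin d, (∫ t in Set.Icc (0:ℝ) 1, (if j = i then t else 1))
      = if j = i then 1/2 else 1 := by
    intro j; split <;> simp [int_id', int_one']
  rw [Finset.prod_congr rfl fun j _ => h2 j, Finset.prod_ite_eq' Finset.univ i]
  simp

lemma int_coord_mul {d : ℕ} (i j : Fin d) :
    ∫ x in Set.Icc (0 : Fin d → ℝ) 1, x i * x j
      = if i = j then 1/3 else 1/4 := by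
  have h1 : ∀ x : Fin d → ℝ, x i * x j
      = ∏ k, ((if k = i then x k else 1) * (if k = j then x k else 1)) := by
    intro x
    rw [Finset.prod_mul_distrib, Finset.prod_ite_eq' Finset.univ i (fun k => x k),
      Finset.prod_ite_eq' Finset.univ j (fun k => x k)]
    simp
  simp_rw [h1]
  rw [prod_int (fun k t => (if k = i then t else 1) * (if k = j then t else 1))]
  by_cases h : i = j
  · subst h
    simp only [if_pos, eq_self_iff_true]
    have h2 : ∀ k : Fin d,
        (∫ t in Set.Icc (0:ℝ) 1, ((if k = i then t else 1) * (if k = i then t else 1)))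
        = if k = i then 1/3 else 1 := by
      intro k; split <;> simp [int_tt, int_one']
    rw [Finset.prod_congr rfl fun k _ => h2 k, Finset.prod_ite_eq' Finset.univ i]
    simp
  · rw [if_neg h]
    have h2 : ∀ k : Fin d,
        (∫ t in Set.Icc (0:ℝ) 1, ((if k = i then t else 1) * (if k = j then t else 1)))
        = (if k = i then (1:ℝ)/2 else 1) * (if k = j then (1:ℝ)/2 else 1) := by
      intro k
      by_cases h1 : k = i <;> by_cases h2 : k = j
      · exact absurd (h1 ▸ h2 ▸ rfl : i = j) h
      · simp [h1, h2, int_id', h, Ne.symm h]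
      · simp [h1, h2, int_id', h, Ne.symm h]
      · simp [h1, h2, int_one']
    rw [Finset.prod_congr rfl fun k _ => h2 k, Finset.prod_mul_distrib,
      Finset.prod_ite_eq' Finset.univ i, Finset.prod_ite_eq' Finset.univ j]
    simp; norm_num

lemma int_coord_prod {d : ℕ} (i : Fin d) :
    ∫ x in Set.Icc (0 : Fin d → ℝ) 1, x i * ∏ k, (1 + x k)
      = 5/9 * (3/2 : ℝ) ^ d := by
  have h1 : ∀ x : Fin d → ℝ, x i * ∏ k, (1 + x k)
      = ∏ k, ((if k = i then x k else 1) * (1 + x k)) := by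
    intro x
    rw [Finset.prod_mul_distrib, Finset.prod_ite_eq' Finset.univ i (fun k => x k)]
    simp
  simp_rw [h1]
  rw [prod_int (fun k t => (if k = i then t else 1) * (1 + t))]
  have h2 : ∀ k : Fin d,
      (∫ t in Set.Icc (0:ℝ) 1, ((if k = i then t else 1) * (1 + t)))
      = 3/2 * (if k = i then (5:ℝ)/9 else 1) := by
    intro k; split <;> simp [int_t1p, int_1p] <;> norm_num
  rw [Finset.prod_congr rfl fun k _ => h2 k, Finset.prod_mul_distrib,
    Finset.prod_const, Finset.prod_ite_eq' Finset.univ i]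
  simp [mul_comm]

lemma int_prod1p {d : ℕ} :
    ∫ x in Set.Icc (0 : Fin d → ℝ) 1, ∏ k, (1 + x k) = (3/2 : ℝ) ^ d := by
  rw [prod_int (fun _ t => 1 + t)]
  simp [int_1p, div_pow]

lemma int_prod1p_sq {d : ℕ} :
    ∫ x in Set.Icc (0 : Fin d → ℝ) 1, (∏ k, (1 + x k)) * (∏ k, (1 + x k))
      = (7/3 : ℝ) ^ d := by
  have h1 : ∀ x : Fin d → ℝ, (∏ k, (1 + x k)) * (∏ k, (1 + x k))
      = ∏ k, ((1 + x k) * (1 + x k)) := fun x => (Finset.prod_mul_distrib).symm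
  simp_rw [h1]
  rw [prod_int (fun _ t => (1 + t) * (1 + t))]
  simp [int_1p2, div_pow]
/-- Variance of `f_δ` over the uniform measure on `[0,1]^d`:
`var(f_δ) = (dδ/9)(3/2)^d + δ²((7/3)^d − (9/4)^d) + d/12`. -/
theorem fdelta_variance (d : ℕ) (hd : 0 < d) (δ : ℝ) :
    (∫ x in Set.Icc (0 : Fin d → ℝ) 1, (fdelta δ x) ^ 2) -
        (∫ x in Set.Icc (0 : Fin d → ℝ) 1, fdelta δ x) ^ 2 =
      (d : ℝ) * δ / 9 * (3 / 2 : ℝ) ^ d +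
        δ ^ 2 * ((7 / 3 : ℝ) ^ d - (9 / 4 : ℝ) ^ d) + (d : ℝ) / 12 := by
  have hSc : Continuous (fun x : Fin d → ℝ => ∑ i, x i) :=
    continuous_finset_sum _ fun i _ => continuous_apply i
  have hPc : Continuous (fun x : Fin d → ℝ => ∏ j, (1 + x j)) :=
    continuous_finset_prod _ fun j _ => continuous_const.add (continuous_apply j)
  have hint : ∀ {f : (Fin d → ℝ) → ℝ}, Continuous f →
      IntegrableOn f (Set.Icc (0 : Fin d → ℝ) 1) volume := fun hf =>
    hf.continuousOn.integrableOn_compact isCompact_Icc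
  -- mean
  have hmean : (∫ x in Set.Icc (0 : Fin d → ℝ) 1, fdelta δ x)
      = d / 2 + δ * (3/2 : ℝ) ^ d := by
    unfold fdelta
    rw [integral_add (hint hSc) (hint (continuous_const.fun_mul hPc)),
      integral_const_mul, int_prod1p,
      integral_finset_sum _ (fun i _ => hint (continuous_apply i))]
    simp [int_coord]
    ring
  -- second moment
  have hsq : (∫ x in Set.Icc (0 : Fin d → ℝ) 1, (fdelta δ x) ^ 2)
      = ((d:ℝ) * ((d:ℝ)/4 + 1/12)) + 2 * δ * ((d:ℝ) * (5/9 * (3/2:ℝ)^d))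
        + δ^2 * (7/3:ℝ)^d := by
    have hexp : ∀ x : Fin d → ℝ, (fdelta δ x) ^ 2
        = (∑ i, x i) * (∑ i, x i)
          + (2 * δ * ((∑ i, x i) * ∏ j, (1 + x j))
          + δ^2 * ((∏ j, (1 + x j)) * (∏ j, (1 + x j)))) := by
      intro x; unfold fdelta; ring
    simp_rw [hexp]
    rw [integral_add (hint (hSc.fun_mul hSc))
        (hint ((continuous_const.fun_mul (hSc.fun_mul hPc)).fun_add
          (continuous_const.fun_mul (hPc.fun_mul hPc)))),
      integral_add (hint (continuous_const.fun_mul (hSc.fun_mul hPc)))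
        (hint (continuous_const.fun_mul (hPc.fun_mul hPc))),
      integral_const_mul, integral_const_mul, int_prod1p_sq]
    have hA : (∫ x in Set.Icc (0 : Fin d → ℝ) 1, (∑ i, x i) * (∑ i, x i))
        = (d:ℝ) * ((d:ℝ)/4 + 1/12) := by
      have h1 : ∀ x : Fin d → ℝ, (∑ i, x i) * (∑ i, x i)
          = ∑ i, ∑ j, x i * x j := fun x => Finset.sum_mul_sum _ _ _ _
      simp_rw [h1]
      rw [integral_finset_sum _ (fun i _ => hint
        (continuous_finset_sum _ fun j _ => (continuous_apply i).fun_mul (continuous_apply j)))]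
      have h2 : ∀ i : Fin d,
          (∫ x in Set.Icc (0 : Fin d → ℝ) 1, ∑ j, x i * x j)
          = (d:ℝ)/4 + 1/12 := by
        intro i
        rw [integral_finset_sum _ (fun j _ => hint
          ((continuous_apply i).fun_mul (continuous_apply j)))]
        have h3 : ∀ j : Fin d, (∫ x in Set.Icc (0 : Fin d → ℝ) 1, x i * x j)
            = 1/4 + (if i = j then (1:ℝ)/12 else 0) := by
          intro j; rw [int_coord_mul]; split <;> norm_num
        rw [Finset.sum_congr rfl fun j _ => h3 j, Finset.sum_add_distrib,
          Finset.sum_const, Finset.sum_ite_eq Finset.univ i]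
        simp
        ring
      rw [Finset.sum_congr rfl fun i _ => h2 i, Finset.sum_const]
      simp
      ring
    have hB : (∫ x in Set.Icc (0 : Fin d → ℝ) 1, (∑ i, x i) * ∏ j, (1 + x j))
        = (d:ℝ) * (5/9 * (3/2:ℝ)^d) := by
      have h1 : ∀ x : Fin d → ℝ, (∑ i, x i) * ∏ j, (1 + x j)
          = ∑ i, x i * ∏ j, (1 + x j) := fun x => Finset.sum_mul _ _ _
      simp_rw [h1]
      rw [integral_finset_sum _ (fun i _ => hint ((continuous_apply i).fun_mul hPc))]
      rw [Finset.sum_congr rfl fun i _ => int_coord_prod i, Finset.sum_const]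
      simp [mul_comm]
    rw [hA, hB]
    ring
  rw [hmean, hsq]
  have h94 : ((9:ℝ)/4)^d = (3/2:ℝ)^d * (3/2:ℝ)^d := by
    rw [← mul_pow]; norm_num
  rw [h94]; push_cast; ring
end
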